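/- Let 𝒬 be a finite set of n×n matrices over k such that the product of any two elements of 𝒬 lies in 𝒬 ∪ {0} and every product of n elements of 𝒬 equals the zero matrix. Then for every family of scalars (a_Q)_{Q∈𝒬}, the matrix S = I_n + Σ_{Q∈𝒬} a_Q Q is invertible and belongs to the subgroup of GL_n(k) generated by the matrices I_n + bQ with b ∈ k and Q ∈ 𝒬. -/
import Mathlib

open Matrix

namespace OneAddSpanAux

variable {k : Type*} [Field k] {n : ℕ} (Q : Finset (Matrix (Fin n) (Fin n) k))

/-- Elements of `Q` that can be written as a product of at least `j` elements of `Q`. -/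
def F (j : ℕ) : Set (Matrix (Fin n) (Fin n) k) :=
  {A | A ∈ Q ∧ ∃ l : List (Matrix (Fin n) (Fin n) k),
    j ≤ l.length ∧ (∀ B ∈ l, B ∈ Q) ∧ l.prod = A}

lemma F_anti {i j : ℕ} (h : i ≤ j) : F Q j ⊆ F Q i := by
  rintro A ⟨hAQ, l, hl, hlQ, hlp⟩
  exact ⟨hAQ, l, le_trans h hl, hlQ, hlp⟩

lemma mem_F_one {A : Matrix (Fin n) (Fin n) k} (hA : A ∈ Q) : A ∈ F Q 1 :=
  ⟨hA, [A], by simp, by simpa using hA, by simp⟩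

lemma mul_mem_F (hmul : ∀ A ∈ Q, ∀ B ∈ Q, A * B ∈ Q ∨ A * B = 0)
    {A B : Matrix (Fin n) (Fin n) k} {i j : ℕ} (hA : A ∈ F Q i) (hB : B ∈ F Q j) :
    A * B = 0 ∨ A * B ∈ F Q (i + j) := by
  obtain ⟨hAQ, lA, hlA, hlAQ, hlAp⟩ := hA
  obtain ⟨hBQ, lB, hlB, hlBQ, hlBp⟩ := hB
  rcases hmul A hAQ B hBQ with h | h
  · right
    refine ⟨h, lA ++ lB, ?_, ?_, ?_⟩
    · rw [List.length_append]; omega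
    · intro C hC
      rcases List.mem_append.mp hC with hC | hC
      · exact hlAQ C hC
      · exact hlBQ C hC
    · rw [List.prod_append, hlAp, hlBp]
  · left; exact h

lemma F_subset_zero
    (hnil : ∀ l : List (Matrix (Fin n) (Fin n) k),
      l.length = n → (∀ A ∈ l, A ∈ Q) → l.prod = 0)
    {j : ℕ} (hj : n ≤ j) : F Q j ⊆ {0} := by
  rintro A ⟨hAQ, l, hl, hlQ, hlp⟩
  have hlen : n ≤ l.length := le_trans hj hl
  have htake : (l.take n).prod = 0 := by
    refine hnil _ ?_ ?_
    · rw [List.length_take]; omega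
    · intro B hB; exact hlQ B (List.mem_of_mem_take hB)
  have : l.prod = 0 := by
    rw [← List.take_append_drop n l, List.prod_append, htake, zero_mul]
  simp only [Set.mem_singleton_iff]
  rw [← hlp, this]

lemma mul_mem_span (hmul : ∀ A ∈ Q, ∀ B ∈ Q, A * B ∈ Q ∨ A * B = 0)
    {x y : Matrix (Fin n) (Fin n) k} {i j : ℕ}
    (hx : x ∈ Submodule.span k (F Q i)) (hy : y ∈ Submodule.span k (F Q j)) :
    x * y ∈ Submodule.span k (F Q (i + j)) := by
  have h := Submodule.mul_mem_mul hx hy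
  rw [Submodule.span_mul_span] at h
  refine Submodule.span_le.mpr ?_ h
  rintro _ ⟨A, hA, B, hB, rfl⟩
  rcases mul_mem_F Q hmul hA hB with h0 | hF
  · show A * B ∈ _
    rw [h0]; exact Submodule.zero_mem _
  · exact Submodule.subset_span hF

lemma pow_mem_span (hmul : ∀ A ∈ Q, ∀ B ∈ Q, A * B ∈ Q ∨ A * B = 0)
    {z : Matrix (Fin n) (Fin n) k} (hz : z ∈ Submodule.span k (F Q 1)) :
    ∀ i : ℕ, z ^ (i + 1) ∈ Submodule.span k (F Q (i + 1))
  | 0 => by simpa using hz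
  | i + 1 => by
    have h1 := pow_mem_span hmul hz i
    have h2 := mul_mem_span Q hmul h1 hz
    rw [← pow_succ] at h2
    exact h2

lemma pow_n_eq_zero (hmul : ∀ A ∈ Q, ∀ B ∈ Q, A * B ∈ Q ∨ A * B = 0)
    (hnil : ∀ l : List (Matrix (Fin n) (Fin n) k),
      l.length = n → (∀ A ∈ l, A ∈ Q) → l.prod = 0)
    {z : Matrix (Fin n) (Fin n) k} (hz : z ∈ Submodule.span k (F Q 1)) :
    z ^ n = 0 := by
  rcases Nat.eq_zero_or_pos n with hn | hn
  · subst hn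
    have h1 : (1 : Matrix (Fin 0) (Fin 0) k) = 0 := Subsingleton.elim _ _
    rw [pow_zero, h1]
  · obtain ⟨m, rfl⟩ : ∃ m, n = m + 1 := ⟨n - 1, by omega⟩
    have h1 := pow_mem_span Q hmul hz m
    have h2 : Submodule.span k (F Q (m + 1)) ≤ ⊥ := by
      rw [← Submodule.span_zero_singleton (R := k)]
      exact Submodule.span_mono (F_subset_zero Q hnil le_rfl)
    simpa using h2 h1

lemma geom_facts {z : Matrix (Fin n) (Fin n) k} (hzn : z ^ n = 0) :
    (1 + z) * (∑ i ∈ Finset.range n, (-z) ^ i) = 1 ∧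
    (∑ i ∈ Finset.range n, (-z) ^ i) * (1 + z) = 1 := by
  have hneg : (-z) ^ n = 0 := by
    rw [neg_pow, hzn, mul_zero]
  have h1 := mul_geom_sum (-z) n
  have h2 := geom_sum_mul (-z) n
  rw [hneg] at h1 h2
  have e : (1 + z : Matrix (Fin n) (Fin n) k) = -(-z - 1) := by abel
  constructor
  · rw [e, neg_mul, h1]; abel
  · rw [e, mul_neg, h2]; abel

lemma exists_unit (hmul : ∀ A ∈ Q, ∀ B ∈ Q, A * B ∈ Q ∨ A * B = 0)
    (hnil : ∀ l : List (Matrix (Fin n) (Fin n) k),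
      l.length = n → (∀ A ∈ l, A ∈ Q) → l.prod = 0)
    {z : Matrix (Fin n) (Fin n) k} (hz : z ∈ Submodule.span k (F Q 1)) :
    ∃ u : (Matrix (Fin n) (Fin n) k)ˣ, (u : Matrix (Fin n) (Fin n) k) = 1 + z := by
  obtain ⟨h1, h2⟩ := geom_facts (pow_n_eq_zero Q hmul hnil hz)
  exact ⟨⟨1 + z, _, h1, h2⟩, rfl⟩

lemma inv_form (hmul : ∀ A ∈ Q, ∀ B ∈ Q, A * B ∈ Q ∨ A * B = 0)
    (hnil : ∀ l : List (Matrix (Fin n) (Fin n) k),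
      l.length = n → (∀ A ∈ l, A ∈ Q) → l.prod = 0)
    {z : Matrix (Fin n) (Fin n) k} (hz : z ∈ Submodule.span k (F Q 1))
    (u : (Matrix (Fin n) (Fin n) k)ˣ) (hu : (u : Matrix (Fin n) (Fin n) k) = 1 + z) :
    ∃ w ∈ Submodule.span k (F Q 1), (↑u⁻¹ : Matrix (Fin n) (Fin n) k) = 1 + w := by
  obtain ⟨h1, _⟩ := geom_facts (pow_n_eq_zero Q hmul hnil hz)
  have hinv : (↑u⁻¹ : Matrix (Fin n) (Fin n) k) = ∑ i ∈ Finset.range n, (-z) ^ i := by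
    apply Units.inv_eq_of_mul_eq_one_right
    rw [hu]; exact h1
  refine ⟨(∑ i ∈ Finset.range n, (-z) ^ i) - 1, ?_, by rw [hinv]; abel⟩
  rcases Nat.eq_zero_or_pos n with hn | hn
  · subst hn
    have h1' : (∑ i ∈ Finset.range 0, (-z) ^ i) - 1 = 0 := Subsingleton.elim _ _
    rw [h1']
    exact Submodule.zero_mem _
  · obtain ⟨m, rfl⟩ : ∃ m, n = m + 1 := ⟨n - 1, by omega⟩
    rw [Finset.sum_range_succ']
    simp only [pow_zero]
    have : (∑ i ∈ Finset.range m, (-z) ^ (i + 1)) + 1 - 1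
        = ∑ i ∈ Finset.range m, (-z) ^ (i + 1) := by abel
    rw [this]
    refine Submodule.sum_mem _ fun i _ => ?_
    have hnz : (-z) ∈ Submodule.span k (F Q 1) := Submodule.neg_mem _ hz
    exact Submodule.span_mono (F_anti Q (by omega)) (pow_mem_span Q hmul hnz i)

lemma inner (hmul : ∀ A ∈ Q, ∀ B ∈ Q, A * B ∈ Q ∨ A * B = 0)
    (hnil : ∀ l : List (Matrix (Fin n) (Fin n) k),
      l.length = n → (∀ A ∈ l, A ∈ Q) → l.prod = 0)
    (G : Subgroup (Matrix (Fin n) (Fin n) k)ˣ)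
    (hG : ∀ (b : k) (B : Matrix (Fin n) (Fin n) k), B ∈ Q →
      ∀ v : (Matrix (Fin n) (Fin n) k)ˣ, (v : Matrix (Fin n) (Fin n) k) = 1 + b • B → v ∈ G)
    {j : ℕ} (hj : 1 ≤ j)
    (t : Finset (Matrix (Fin n) (Fin n) k)) (ht : ↑t ⊆ F Q j)
    (c : Matrix (Fin n) (Fin n) k → k) :
    ∃ u : (Matrix (Fin n) (Fin n) k)ˣ, u ∈ G ∧ ∃ y ∈ Submodule.span k (F Q (j + 1)),
      (u : Matrix (Fin n) (Fin n) k) = 1 + (∑ A ∈ t, c A • A) + y := by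
  classical
  revert ht
  induction t using Finset.induction_on with
  | empty => exact fun _ => ⟨1, one_mem G, 0, Submodule.zero_mem _, by simp⟩
  | @insert A t hA ih =>
    intro ht
    rw [Finset.coe_insert, Set.insert_subset_iff] at ht
    obtain ⟨hAF, htF⟩ := ht
    obtain ⟨u', hu'G, y', hy', hu'⟩ := ih htF
    have hA1 : c A • A ∈ Submodule.span k (F Q 1) :=
      Submodule.smul_mem _ _ (Submodule.subset_span (mem_F_one Q hAF.1))
    obtain ⟨v, hv⟩ := exists_unit Q hmul hnil hA1
    have hvG : v ∈ G := hG (c A) A hAF.1 v hv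
    refine ⟨v * u', mul_mem hvG hu'G,
      y' + (c A • A) * ((∑ B ∈ t, c B • B) + y'), ?_, ?_⟩
    · refine Submodule.add_mem _ hy' ?_
      have h1 : c A • A ∈ Submodule.span k (F Q j) :=
        Submodule.smul_mem _ _ (Submodule.subset_span hAF)
      have h2 : (∑ B ∈ t, c B • B) + y' ∈ Submodule.span k (F Q j) := by
        refine Submodule.add_mem _ ?_ (Submodule.span_mono (F_anti Q (by omega)) hy')
        exact Submodule.sum_mem _ fun B hB =>
          Submodule.smul_mem _ _ (Submodule.subset_span (htF hB))
      exact Submodule.span_mono (F_anti Q (by omega)) (mul_mem_span Q hmul h1 h2)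
    · rw [Units.val_mul, hv, hu', Finset.sum_insert hA]
      set p := c A • A
      set s := ∑ B ∈ t, c B • B
      noncomm_ring

lemma key (hmul : ∀ A ∈ Q, ∀ B ∈ Q, A * B ∈ Q ∨ A * B = 0)
    (hnil : ∀ l : List (Matrix (Fin n) (Fin n) k),
      l.length = n → (∀ A ∈ l, A ∈ Q) → l.prod = 0)
    (G : Subgroup (Matrix (Fin n) (Fin n) k)ˣ)
    (hG : ∀ (b : k) (B : Matrix (Fin n) (Fin n) k), B ∈ Q →
      ∀ v : (Matrix (Fin n) (Fin n) k)ˣ, (v : Matrix (Fin n) (Fin n) k) = 1 + b • B → v ∈ G) :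
    ∀ m j : ℕ, 1 ≤ j → n ≤ j + m →
      ∀ x ∈ Submodule.span k (F Q j),
        ∃ u : (Matrix (Fin n) (Fin n) k)ˣ, u ∈ G ∧
          (u : Matrix (Fin n) (Fin n) k) = 1 + x := by
  intro m
  induction m with
  | zero =>
    intro j hj hn x hx
    have hx0 : x = 0 := by
      have h2 : Submodule.span k (F Q j) ≤ ⊥ := by
        rw [← Submodule.span_zero_singleton (R := k)]
        exact Submodule.span_mono (F_subset_zero Q hnil (by omega))
      simpa using h2 hx
    exact ⟨1, one_mem _, by simp [hx0]⟩
  | succ m ih =>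
    intro j hj hn x hx
    obtain ⟨c, hcsupp, hcsum⟩ := Submodule.mem_span_set.mp hx
    obtain ⟨u, huG, y, hy, hu⟩ := inner Q hmul hnil G hG hj c.support hcsupp c
    have hux : (u : Matrix (Fin n) (Fin n) k) = 1 + x + y := by
      rw [hu, ← hcsum]; rfl
    have hz : x + y ∈ Submodule.span k (F Q 1) :=
      Submodule.add_mem _ (Submodule.span_mono (F_anti Q hj) hx)
        (Submodule.span_mono (F_anti Q (by omega)) hy)
    obtain ⟨w, hw, huinv⟩ := inv_form Q hmul hnil hz u (by rw [hux]; abel)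
    have hx'mem : -(y + w * y) ∈ Submodule.span k (F Q (j + 1)) := by
      refine Submodule.neg_mem _ (Submodule.add_mem _ hy ?_)
      exact Submodule.span_mono (F_anti Q (by omega)) (mul_mem_span Q hmul hw hy)
    obtain ⟨v, hvG, hv⟩ := ih (j + 1) (by omega) (by omega) _ hx'mem
    refine ⟨u * v, mul_mem huG hvG, ?_⟩
    have h1 : (↑u⁻¹ : Matrix (Fin n) (Fin n) k) * (1 + x) = 1 + -(y + w * y) := by
      have e : (1 : Matrix (Fin n) (Fin n) k) + x = ↑u - y := by rw [hux]; abel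
      rw [e, mul_sub, Units.inv_mul, huinv]
      noncomm_ring
    calc (↑(u * v) : Matrix (Fin n) (Fin n) k) = ↑u * ↑v := Units.val_mul u v
      _ = ↑u * (↑u⁻¹ * (1 + x)) := by rw [hv, h1]
      _ = (↑u * ↑u⁻¹) * (1 + x) := by rw [mul_assoc]
      _ = 1 + x := by rw [Units.mul_inv, one_mul]

end OneAddSpanAux

open OneAddSpanAux in
theorem one_add_span_mem_subgroup_closure {k : Type*} [Field k] [IsAlgClosed k]
    {n : ℕ} (Q : Finset (Matrix (Fin n) (Fin n) k))
    (hmul : ∀ A ∈ Q, ∀ B ∈ Q, A * B ∈ Q ∨ A * B = 0)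
    (hnil : ∀ l : List (Matrix (Fin n) (Fin n) k),
      l.length = n → (∀ A ∈ l, A ∈ Q) → l.prod = 0)
    (a : Matrix (Fin n) (Fin n) k → k) :
    ∃ u : (Matrix (Fin n) (Fin n) k)ˣ,
      (u : Matrix (Fin n) (Fin n) k) = 1 + ∑ A ∈ Q, a A • A ∧
      u ∈ Subgroup.closure {v : (Matrix (Fin n) (Fin n) k)ˣ |
        ∃ (b : k) (B : Matrix (Fin n) (Fin n) k), B ∈ Q ∧
          (v : Matrix (Fin n) (Fin n) k) = 1 + b • B} := by
  have hx : (∑ A ∈ Q, a A • A) ∈ Submodule.span k (F Q 1) :=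
    Submodule.sum_mem _ fun A hA =>
      Submodule.smul_mem _ _ (Submodule.subset_span (mem_F_one Q hA))
  obtain ⟨u, huG, hu⟩ := key Q hmul hnil
    (Subgroup.closure {v : (Matrix (Fin n) (Fin n) k)ˣ |
      ∃ (b : k) (B : Matrix (Fin n) (Fin n) k), B ∈ Q ∧
        (v : Matrix (Fin n) (Fin n) k) = 1 + b • B})
    (fun b B hB v hv => Subgroup.subset_closure ⟨b, B, hB, hv⟩)
    n 1 le_rfl (by omega) _ hx
  exact ⟨u, hu, huG⟩
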